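/- Let s : Fin n → ℕ satisfy ∑_i s i = 2·S. Then there exists a finite subset A ⊆ Fin n such that ∑_{i ∈ A} s i ≤ S and ∑_{i ∉ A} s i ≤ ∑_{i ∈ A} s i, if and only if there exists a finite subset A ⊆ Fin n with ∑_{i ∈ A} s i = S. -/
import Mathlib

/-- Correctness of the reduction from Partition to plurality-weighted-$bribery with
two candidates: a bribery of the voters in `A` (each of weight and price `s i`) is
within budget `S` and makes `p` a winner iff some subset of the weights sums to `S`. -/
theorem partition_to_plurality_weighted_dollar_bribery (n S : ℕ) (s : Fin n → ℕ)
    (hs : ∑ i, s i = 2 * S) :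
    (∃ A : Finset (Fin n),
        (∑ i ∈ A, s i) ≤ S ∧ (∑ i ∈ Aᶜ, s i) ≤ ∑ i ∈ A, s i) ↔
      ∃ A : Finset (Fin n), ∑ i ∈ A, s i = S := by
  have key : ∀ A : Finset (Fin n), ∑ i ∈ A, s i + ∑ i ∈ Aᶜ, s i = 2 * S := by
    intro A
    rw [Finset.sum_add_sum_compl, hs]
  constructor
  · rintro ⟨A, h1, h2⟩
    exact ⟨A, by have := key A; omega⟩
  · rintro ⟨A, h⟩
    exact ⟨A, le_of_eq h, by have := key A; omega⟩
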